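/- (Identification with covariate-dependent weights.) Let t : X → T be measurable and let κ be a Markov kernel from T to X disintegrating P₀ along t, i.e., for (t∗P₀)-almost every t̃, κ(t̃) is a probability measure concentrated on t⁻¹({t̃}), and ∫_X f dP₀ = ∫_T (∫_X f dκ(t̃)) d(t∗P₀)(t̃) for every bounded measurable f : X → ℝ. For t̃ ∈ T let H(t̃) be the K×K matrix with entries ∫_S m_j m_k dκ(t̃), and assume H(t̃) is invertible for (t∗P₀)-almost every t̃. Suppose there exists a measurable map w* : T → Δ such that Σ_{k=1}^K m_k(x) w*_k(t(x)) = m₀(x) for P₀-almost every x ∈ X. Then for (t∗P₀)-almost every t̃, w*(t̃) is the unique minimizer over Δ of w ↦ ∫_S (Σ_{k=1}^K m_k w_k − m₀)² dκ(t̃), and θ₀ := ∫_X m₀ dP₀ = ∫_S m₀ dP₀ + ∫_{X∖S} Σ_{k=1}^K m_k(x) w*_k(t(x)) dP₀(x). -/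

import Mathlib

open MeasureTheory Matrix

/-- The simplex `Δ = {w ∈ ℝ^K : w_j ≥ 0 for all j, Σ_j w_j = 1}`. -/
def simplex (K : ℕ) : Set (Fin K → ℝ) :=
  {w | (∀ j, 0 ≤ w j) ∧ ∑ j, w j = 1}

open scoped ENNReal NNReal

lemma aux_two_halves : (1 : ℝ≥0∞) / 1 = 1 / 2 + 1 / 2 := by
  rw [ENNReal.div_add_div_same, one_div_one]
  norm_num
  rw [ENNReal.div_self (by norm_num) (by norm_num)]

lemma aux_mul_int {X : Type*} [MeasurableSpace X] {ν : Measure X}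
    {f g : X → ℝ} (hf : MemLp f 2 ν) (hg : MemLp g 2 ν) :
    Integrable (fun x => f x * g x) ν := by
  have := memLp_one_iff_integrable.mp (hg.smul hf (r := 1) (hpqr := ⟨by rw [inv_one]; exact ENNReal.inv_two_add_inv_two⟩))
  exact this

lemma aux_min {K : ℕ} {X : Type*} [MeasurableSpace X]
    (ν : Measure X) (hν : IsProbabilityMeasure ν)
    (S : Set X)
    (m₀ : X → ℝ) (m : Fin K → X → ℝ)
    (hm₀ : MemLp m₀ 2 ν) (hm : ∀ k, MemLp (m k) 2 ν)
    (ws : Fin K → ℝ)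
    (heq : ∀ᵐ x ∂ν, ∑ k, m k x * ws k = m₀ x)
    (hH : IsUnit (Matrix.of fun j k : Fin K => ∫ x in S, m j x * m k x ∂ν).det) :
    ∀ w : Fin K → ℝ, w ≠ ws →
      (∫ x in S, (∑ k, m k x * ws k - m₀ x) ^ 2 ∂ν)
        < ∫ x in S, (∑ k, m k x * w k - m₀ x) ^ 2 ∂ν := by
  intro w hw
  set H : Matrix (Fin K) (Fin K) ℝ :=
    Matrix.of fun j k : Fin K => ∫ x in S, m j x * m k x ∂ν with hHdef
  set d : Fin K → ℝ := w - ws with hd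
  set g : X → ℝ := fun x => ∑ k, d k * m k x with hgdef
  have hL : (∫ x in S, (∑ k, m k x * ws k - m₀ x) ^ 2 ∂ν) = 0 := by
    rw [show (0:ℝ) = ∫ x in S, (0:ℝ) ∂ν by simp]
    apply integral_congr_ae
    filter_upwards [ae_restrict_of_ae heq] with x hx
    rw [hx]; ring
  have hR : (∫ x in S, (∑ k, m k x * w k - m₀ x) ^ 2 ∂ν)
      = ∫ x in S, g x ^ 2 ∂ν := by
    apply integral_congr_ae
    filter_upwards [ae_restrict_of_ae heq] with x hx
    have : ∑ k, m k x * w k - m₀ x = g x := by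
      rw [← hx, ← Finset.sum_sub_distrib]
      exact Finset.sum_congr rfl fun k _ => by simp [hd]; ring
    rw [this]
  rw [hL, hR]
  have hgL2 : MemLp g 2 ν :=
    memLp_finset_sum _ (fun k _ => (hm k).const_mul (d k))
  have hnn : (0:ℝ) ≤ ∫ x in S, g x ^ 2 ∂ν :=
    integral_nonneg fun x => sq_nonneg _
  rcases hnn.lt_or_eq with h | h
  · exact h
  exfalso
  -- integral is zero, derive contradiction
  have hg2int : Integrable (fun x => g x ^ 2) (ν.restrict S) :=
    hgL2.integrable_sq.restrict
  have hg0 : g =ᵐ[ν.restrict S] 0 := by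
    have := (integral_eq_zero_iff_of_nonneg (fun x => sq_nonneg (g x)) hg2int).mp h.symm
    filter_upwards [this] with x hx
    have : g x ^ 2 = 0 := hx
    exact pow_eq_zero_iff (by norm_num) |>.mp this
  have hmv : H.mulVec d = 0 := by
    funext j
    have hint : ∀ k, Integrable (fun x => m j x * m k x * d k) (ν.restrict S) :=
      fun k => ((aux_mul_int (hm j) (hm k)).restrict).mul_const _
    have step1 : H.mulVec d j = ∑ k, ∫ x in S, m j x * m k x * d k ∂ν := by
      simp only [Matrix.mulVec, dotProduct, hHdef, Matrix.of_apply]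
      exact Finset.sum_congr rfl fun k _ => (integral_mul_const _ _).symm
    have step2 : (∑ k, ∫ x in S, m j x * m k x * d k ∂ν)
        = ∫ x in S, ∑ k, m j x * m k x * d k ∂ν :=
      (integral_finset_sum _ fun k _ => hint k).symm
    have step3 : (∫ x in S, ∑ k, m j x * m k x * d k ∂ν)
        = ∫ x in S, m j x * g x ∂ν := by
      apply integral_congr_ae
      filter_upwards with x
      rw [hgdef, Finset.mul_sum]
      exact Finset.sum_congr rfl fun k _ => by ring
    have step4 : (∫ x in S, m j x * g x ∂ν) = 0 := by
      have : (fun x => m j x * g x) =ᵐ[ν.restrict S] 0 := by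
        filter_upwards [hg0] with x hx
        simp [hx]
      calc (∫ x in S, m j x * g x ∂ν) = ∫ x in S, (0 : X → ℝ) x ∂ν :=
            integral_congr_ae this
        _ = 0 := by simp
    rw [step1, step2, step3, step4]; rfl
  have hdz : d = 0 := by
    have h1 : H⁻¹.mulVec (H.mulVec d) = d := by
      rw [Matrix.mulVec_mulVec, Matrix.nonsing_inv_mul _ hH, Matrix.one_mulVec]
    rw [hmv, Matrix.mulVec_zero] at h1
    exact h1.symm
  exact hw (by rwa [hd, sub_eq_zero] at hdz)

/-- Identification with covariate-dependent weights: if `κ` disintegrates `P₀` along a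
measurable `t : X → T`, the conditional Gram matrices `H(tt)` are a.e. invertible, and a
measurable `w* : T → Δ` satisfies `Σ_k m_k(x) w*_k(t(x)) = m₀(x)` `P₀`-a.e., then for
`(t∗P₀)`-a.e. `tt`, `w*(tt)` is the unique minimizer over `Δ` of
`w ↦ ∫_S (Σ_k m_k w_k − m₀)² dκ(tt)`, and
`θ₀ = ∫ m₀ dP₀ = ∫_S m₀ dP₀ + ∫_{X∖S} Σ_k m_k(x) w*_k(t(x)) dP₀(x)`. -/
theorem stmt5 {K : ℕ} (hK : 0 < K) {X T : Type*}
    [MeasurableSpace X] [MeasurableSpace T]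
    (P₀ : Measure X) [IsProbabilityMeasure P₀]
    (S : Set X) (hS : MeasurableSet S)
    (m₀ : X → ℝ) (m : Fin K → X → ℝ)
    (hm₀meas : Measurable m₀) (hmmeas : ∀ k, Measurable (m k))
    (hm₀L2 : MemLp m₀ 2 P₀) (hmL2 : ∀ k, MemLp (m k) 2 P₀)
    (t : X → T) (ht : Measurable t)
    (κ : T → Measure X)
    (hκprob : ∀ᵐ tt ∂(P₀.map t), IsProbabilityMeasure (κ tt) ∧ κ tt ((t ⁻¹' {tt})ᶜ) = 0)
    (hdisint : ∀ f : X → ℝ, Measurable f → (∃ C : ℝ, ∀ x, |f x| ≤ C) →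
      ∫ x, f x ∂P₀ = ∫ tt, (∫ x, f x ∂(κ tt)) ∂(P₀.map t))
    (hm₀L2κ : ∀ᵐ tt ∂(P₀.map t), MemLp m₀ 2 (κ tt))
    (hmL2κ : ∀ᵐ tt ∂(P₀.map t), ∀ k, MemLp (m k) 2 (κ tt))
    (hHinv : ∀ᵐ tt ∂(P₀.map t),
      IsUnit (Matrix.of fun j k : Fin K => ∫ x in S, m j x * m k x ∂(κ tt)).det)
    (wstar : T → Fin K → ℝ) (hwstarmeas : Measurable wstar)
    (hwstarΔ : ∀ tt, wstar tt ∈ simplex K)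
    (htrans : ∀ᵐ x ∂P₀, ∑ k, m k x * wstar (t x) k = m₀ x) :
    (∀ᵐ tt ∂(P₀.map t),
      ∀ w ∈ simplex K, w ≠ wstar tt →
        (∫ x in S, (∑ k, m k x * wstar tt k - m₀ x) ^ 2 ∂(κ tt))
          < ∫ x in S, (∑ k, m k x * w k - m₀ x) ^ 2 ∂(κ tt)) ∧
    ∫ x, m₀ x ∂P₀
      = (∫ x in S, m₀ x ∂P₀) + ∫ x in Sᶜ, (∑ k, m k x * wstar (t x) k) ∂P₀ := by
  haveI hPmap : IsProbabilityMeasure (P₀.map t) :=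
    Measure.isProbabilityMeasure_map ht.aemeasurable
  -- the "good" set where the transfer equality holds
  set G : Set X := {x | ∑ k, m k x * wstar (t x) k = m₀ x} with hGdef
  have hsummeas : Measurable (fun x => ∑ k, m k x * wstar (t x) k) := by
    apply Finset.measurable_sum
    intro k _
    exact (hmmeas k).mul (((measurable_pi_apply k).comp hwstarmeas).comp ht)
  have hG : MeasurableSet G := measurableSet_eq_fun hsummeas hm₀meas
  have hPG : P₀ G = 1 := by
    rw [← prob_compl_eq_zero_iff hG]
    have : {x | ¬ (∑ k, m k x * wstar (t x) k = m₀ x)} = Gᶜ := rfl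
    rw [← this]
    exact htrans
  -- disintegration of the indicator of G
  set f : X → ℝ := G.indicator (1 : X → ℝ) with hfdef
  have hfmeas : Measurable f := measurable_const.indicator hG
  have hfbdd : ∃ C : ℝ, ∀ x, |f x| ≤ C := by
    refine ⟨1, fun x => ?_⟩
    by_cases hx : x ∈ G <;> simp [hfdef, hx]
  have hfint : ∫ x, f x ∂P₀ = 1 := by
    rw [hfdef]
    rw [integral_indicator_one hG, measureReal_def, hPG]
    simp
  have hkey := hdisint f hfmeas hfbdd
  rw [hfint] at hkey
  set g : T → ℝ := fun tt => ∫ x, f x ∂(κ tt) with hgdef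
  have hgint : Integrable g (P₀.map t) := by
    by_contra hcon
    rw [integral_undef hcon] at hkey
    norm_num at hkey
  have hgle : ∀ᵐ tt ∂(P₀.map t), g tt ≤ 1 := by
    filter_upwards [hκprob] with tt ⟨hp, _⟩
    haveI := hp
    rw [hgdef]
    simp only [hfdef]
    rw [integral_indicator_one hG, measureReal_def]
    calc (κ tt G).toReal ≤ (κ tt Set.univ).toReal :=
          ENNReal.toReal_mono (measure_ne_top _ _) (measure_mono (Set.subset_univ _))
      _ = 1 := by simp
  have hzero : ∫ tt, (1 - g tt) ∂(P₀.map t) = 0 := by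
    rw [integral_sub (integrable_const 1) hgint, hkey.symm]
    simp
  have hg1 : ∀ᵐ tt ∂(P₀.map t), g tt = 1 := by
    have := (integral_eq_zero_iff_of_nonneg_ae
      (hgle.mono fun tt h => by simp [sub_nonneg, h])
      ((integrable_const 1).sub hgint)).mp hzero
    filter_upwards [this] with tt htt
    have : (1:ℝ) - g tt = 0 := htt
    linarith
  -- a.e. tt : the transfer equality holds κ tt - a.e. with wstar tt
  have hmain : ∀ᵐ tt ∂(P₀.map t),
      ∀ w ∈ simplex K, w ≠ wstar tt →
        (∫ x in S, (∑ k, m k x * wstar tt k - m₀ x) ^ 2 ∂(κ tt))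
          < ∫ x in S, (∑ k, m k x * w k - m₀ x) ^ 2 ∂(κ tt) := by
    filter_upwards [hκprob, hm₀L2κ, hmL2κ, hHinv, hg1] with tt hpc hm₀κ hmκ hHtt hgtt
    obtain ⟨hp, hc⟩ := hpc
    haveI := hp
    -- κ tt G = 1
    have hκG : κ tt G = 1 := by
      rw [hgdef] at hgtt
      simp only [hfdef] at hgtt
      rw [integral_indicator_one hG, measureReal_def] at hgtt
      exact (ENNReal.toReal_eq_toReal_iff' (measure_ne_top _ _) ENNReal.one_ne_top).mp
        (by simpa using hgtt)
    have hGae : ∀ᵐ x ∂(κ tt), ∑ k, m k x * wstar (t x) k = m₀ x := by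
      rw [ae_iff]
      have : {x | ¬ (∑ k, m k x * wstar (t x) k = m₀ x)} = Gᶜ := rfl
      rw [this]
      exact (prob_compl_eq_zero_iff hG).mpr hκG
    have htae : ∀ᵐ x ∂(κ tt), t x = tt := by
      rw [ae_iff]
      have : {x | ¬ t x = tt} = (t ⁻¹' {tt})ᶜ := by
        ext x; simp
      rw [this]
      exact hc
    have heqκ : ∀ᵐ x ∂(κ tt), ∑ k, m k x * wstar tt k = m₀ x := by
      filter_upwards [hGae, htae] with x h1 h2
      rw [← h2]; exact h1
    intro w _ hw
    exact aux_min (κ tt) hp S m₀ m hm₀κ hmκ (wstar tt) heqκ hHtt w hw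
  refine ⟨hmain, ?_⟩
  have hm₀int : Integrable m₀ P₀ := hm₀L2.integrable (by norm_num)
  rw [← integral_add_compl hS hm₀int]
  congr 1
  apply integral_congr_ae
  filter_upwards [ae_restrict_of_ae htrans] with x hx
  exact hx.symm
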